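/- The area of the pedal triangle of the first isodynamic point equals 2K²√3 / (a² + b² + c² + 4K√3), where a,b,c are side lengths and K is the area of the original triangle. -/

import Mathlib

open EuclideanGeometry Real

noncomputable section

abbrev Pt := EuclideanSpace ℝ (Fin 2)

/-- `S` is the first isodynamic point of triangle `ABC`: it lies on the three
Apollonius circles (e.g. the `A`-Apollonius circle is the locus of `P` with
`PB/PC = AB/AC`) and lies inside the circumcircle. -/
def IsFirstIsodynamic (A B C S : Pt) : Prop :=
  dist S B * dist A C = dist S C * dist A B ∧
  dist S A * dist B C = dist S C * dist B A ∧
  dist S A * dist C B = dist S B * dist C A ∧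
  ∃ O r, dist O A = r ∧ dist O B = r ∧ dist O C = r ∧ dist O S < r

set_option maxHeartbeats 1000000 in
lemma pd_core (pp qq rr XX YY LL K tP tQ tR α β d1 d2 d3 : ℝ)
    (hp : 0 < pp) (hq : 0 < qq) (ha' : 0 < pp + qq - 2*rr)
    (hK2 : 4*K^2 = pp*qq - rr^2) (hK0 : 0 < K) (hL0 : 0 ≤ LL)
    (hXd : XX = α*pp + β*rr) (hYd : YY = α*rr + β*qq)
    (hLd : LL = α*(α*pp + β*rr) + β*(α*rr + β*qq))
    (e1 : (LL - 2*XX + pp)*qq = (LL - 2*YY + qq)*pp)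
    (e2 : LL*(pp + qq - 2*rr) = (LL - 2*YY + qq)*pp)
    (hineq : LL < α*pp + β*qq)
    (htP : tP*(pp + qq - 2*rr) = YY - XX - rr + pp)
    (htQ : tQ*qq = YY) (htR : tR*pp = XX)
    (hd1 : d1 = (1-tP)^2*pp + 2*(1-tP)*(tP-tQ)*rr + (tP-tQ)^2*qq)
    (hd2 : d2 = (1-tP-tR)^2*pp + 2*(1-tP-tR)*tP*rr + tP^2*qq)
    (hd3 : d3 = tR^2*pp - 2*tR*tQ*rr + tQ^2*qq) :
    d1*(pp*qq) = LL*(pp*qq - rr^2) ∧ d2*(pp*qq) = LL*(pp*qq - rr^2) ∧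
      d3*(pp*qq) = LL*(pp*qq - rr^2) ∧
      pp*qq - (pp+qq-rr)*LL = 2*Real.sqrt 3*K*LL ∧ 0 < LL := by
  have hD : 0 < pp*qq - rr^2 := by
    have h4 : 0 < K^2 := pow_pos hK0 2
    linarith [hK2]
  have e0 : LL*(pp*qq - rr^2) = qq*XX^2 - 2*rr*XX*YY + pp*YY^2 := by
    rw [hLd, hXd, hYd]; ring
  have hX2 : 2*qq*XX = pp*qq + LL*(2*rr - pp) := by linear_combination e2 - e1
  have hY2 : 2*pp*YY = pp*qq - LL*(qq - 2*rr) := by linear_combination e2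
  have hαD : α*(pp*qq - rr^2) = qq*XX - rr*YY := by linear_combination rr*hYd - qq*hXd
  have hβD : β*(pp*qq - rr^2) = pp*YY - rr*XX := by linear_combination rr*hXd - pp*hYd
  have h6 : 0 < (α*pp + β*qq - LL)*(pp*qq - rr^2) := mul_pos (by linarith) hD
  have h7 : pp*(qq*XX - rr*YY) + qq*(pp*YY - rr*XX) - LL*(pp*qq - rr^2)
      = (α*pp + β*qq - LL)*(pp*qq - rr^2) := by linear_combination (-pp)*hαD + (-qq)*hβD
  have h9 : 2*(pp*(qq*XX - rr*YY) + qq*(pp*YY - rr*XX) - LL*(pp*qq - rr^2))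
      = (pp+qq-2*rr)*(pp*qq - (pp+qq-rr)*LL) := by
    linear_combination (pp-rr)*hX2 + (qq-rr)*hY2
  have h10 : 0 < (pp+qq-2*rr)*(pp*qq - (pp+qq-rr)*LL) := by linarith
  have sign : 0 < pp*qq - (pp+qq-rr)*LL := by
    by_contra hC
    push_neg at hC
    have hx : (pp+qq-2*rr)*(pp*qq-(pp+qq-rr)*LL) ≤ 0 :=
      mul_nonpos_iff.mpr (Or.inl ⟨ha'.le, hC⟩)
    linarith
  have keyfact : (pp+qq-2*rr) * ((pp*qq - (pp+qq-rr)*LL)^2 - 3*(pp*qq-rr^2)*LL^2) = 0 := by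
    linear_combination (-pp*(2*qq*XX + (pp*qq + LL*(2*rr-pp))) + 4*rr*pp*YY) * hX2
      + (2*rr*(pp*qq + LL*(2*rr-pp)) - qq*(2*pp*YY + (pp*qq - LL*(qq-2*rr)))) * hY2
      - 4*pp*qq*e0
  have key : (pp*qq - (pp+qq-rr)*LL)^2 = 3*(pp*qq-rr^2)*LL^2 := by
    rcases mul_eq_zero.mp keyfact with h | h
    · exact absurd h (ne_of_gt ha')
    · linarith
  have h3 : Real.sqrt 3 ^ 2 = 3 := Real.sq_sqrt (by norm_num)
  have hsq : (pp*qq - (pp+qq-rr)*LL)^2 = (2*Real.sqrt 3*K*LL)^2 := by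
    rw [key]; linear_combination (-3*LL^2)*hK2 + (-4*K^2*LL^2)*h3
  have main : pp*qq - (pp+qq-rr)*LL = 2*Real.sqrt 3*K*LL := by
    have hx : 0 ≤ pp*qq - (pp+qq-rr)*LL := le_of_lt sign
    have hy : 0 ≤ 2*Real.sqrt 3*K*LL :=
      mul_nonneg (mul_nonneg (by positivity) hK0.le) hL0
    calc pp*qq - (pp+qq-rr)*LL = Real.sqrt ((pp*qq - (pp+qq-rr)*LL)^2) := (Real.sqrt_sq hx).symm
      _ = Real.sqrt ((2*Real.sqrt 3*K*LL)^2) := by rw [hsq]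
      _ = 2*Real.sqrt 3*K*LL := Real.sqrt_sq hy
  have hLpos : 0 < LL := by
    rcases eq_or_lt_of_le hL0 with h | h
    · exfalso
      have hz : pp*qq = 0 := by rw [← h] at main; linarith [main]
      exact absurd hz (ne_of_gt (mul_pos hp hq))
    · exact h
  have htPv : tP*(2*pp*qq*(pp+qq-2*rr)) = qq*(pp*qq - LL*(qq-2*rr)) - pp*(pp*qq + LL*(2*rr-pp)) + 2*pp*qq*(pp-rr) := by
    linear_combination (2*pp*qq)*htP + qq*hY2 - pp*hX2
  have htQv : tQ*(2*pp*qq) = pp*qq - LL*(qq-2*rr) := by linear_combination 2*pp*htQ + hY2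
  have htRv : tR*(2*pp*qq) = pp*qq + LL*(2*rr-pp) := by linear_combination 2*qq*htR + hX2
  have hWne : (2*pp*qq*(pp+qq-2*rr))^2 ≠ 0 := by positivity
  have hW2ne : (2*pp*qq)^2 ≠ 0 := by positivity
  have hd1f : d1*(pp*qq) = LL*(pp*qq - rr^2) := by
    refine mul_right_cancel₀ hWne ?_
    linear_combination (pp*qq*(2*pp*qq*(pp+qq-2*rr))^2) * hd1
      + ((-4)*pp*qq^2*rr^2*LL + 4*pp*qq^3*rr*LL + -pp*qq^4*LL + 4*pp^2*qq*rr^2*LL + (-4)*pp^2*qq^2*rr^2 + -pp^2*qq^3*LL + pp^2*qq^4 + (-4)*pp^3*qq*rr*LL + pp^3*qq^2*LL + 8*pp^3*qq^2*rr + (-2)*pp^3*qq^3 + pp^4*qq*LL + (-3)*pp^4*qq^2 + (-4)*(tQ*(2*pp*qq))*pp*qq*rr^2 + 6*(tQ*(2*pp*qq))*pp*qq^2*rr + (-2)*(tQ*(2*pp*qq))*pp*qq^3 + 2*(tQ*(2*pp*qq))*pp^2*qq*rr + (-2)*(tQ*(2*pp*qq))*pp^2*qq^2 + (-2)*(tP*(2*pp*qq*(pp+qq-2*rr)))*pp*qq*rr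 + (tP*(2*pp*qq*(pp+qq-2*rr)))*pp*qq^2 + (tP*(2*pp*qq*(pp+qq-2*rr)))*pp^2*qq) * htPv
      + (4*pp*qq^3*rr^2*LL + (-4)*pp*qq^4*rr*LL + pp*qq^5*LL + 8*pp^2*qq*rr^3*LL + (-16)*pp^2*qq^2*rr^2*LL + (-8)*pp^2*qq^2*rr^3 + 6*pp^2*qq^3*rr*LL + 4*pp^2*qq^3*rr^2 + 2*pp^2*qq^4*rr + -pp^2*qq^5 + (-8)*pp^3*qq*rr^2*LL + 12*pp^3*qq^2*rr*LL + 8*pp^3*qq^2*rr^2 + (-3)*pp^3*qq^3*LL + (-2)*pp^3*qq^4 + 2*pp^4*qq*rr*LL + (-2)*pp^4*qq^2*LL + (-2)*pp^4*qq^2*rr + -pp^4*qq^3 + 4*(tQ*(2*pp*qq))*pp*qq^2*rr^2 + (-4)*(tQ*(2*pp*qq))*pp*qq^3*rr + (tQ*(2*pp*qq))*pp*qq^4 + (-4)*(tQ*(2*pp*qq))*pp^2*qq^2*rr + 2*(tQ*(2*pp*qq))*pp^2*qq^3 + (tQ*(2*pp*qq))*pp^3*qq^2) * htQv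
      + (pp^2*qq*(pp+qq-2*rr)^2) * key
  have hd2f : d2*(pp*qq) = LL*(pp*qq - rr^2) := by
    refine mul_right_cancel₀ hWne ?_
    linear_combination (pp*qq*(2*pp*qq*(pp+qq-2*rr))^2) * hd2
      + ((-4)*pp*qq^2*rr^2*LL + 4*pp*qq^3*rr*LL + -pp*qq^4*LL + 4*pp^2*qq*rr^2*LL + (-4)*pp^2*qq^2*rr^2 + -pp^2*qq^3*LL + pp^2*qq^4 + (-4)*pp^3*qq*rr*LL + pp^3*qq^2*LL + 8*pp^3*qq^2*rr + (-2)*pp^3*qq^3 + pp^4*qq*LL + (-3)*pp^4*qq^2 + 4*(tR*(2*pp*qq))*pp*qq*rr^2 + (-2)*(tR*(2*pp*qq))*pp*qq^2*rr + (-6)*(tR*(2*pp*qq))*pp^2*qq*rr + 2*(tR*(2*pp*qq))*pp^2*qq^2 + 2*(tR*(2*pp*qq))*pp^3*qq + (-2)*(tP*(2*pp*qq*(pp+qq-2*rr)))*pp*qq*rr + (tP*(2*pp*qq*(pp+qq-2*rr)))*pp*qq^2 + (tP*(2*pp*qq*(pp+qq-2*rr)))*pp^2*qq) * htPv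
      + (8*pp*qq^2*rr^3*LL + (-8)*pp*qq^3*rr^2*LL + 2*pp*qq^4*rr*LL + (-16)*pp^2*qq^2*rr^2*LL + (-8)*pp^2*qq^2*rr^3 + 12*pp^2*qq^3*rr*LL + 8*pp^2*qq^3*rr^2 + (-2)*pp^2*qq^4*LL + (-2)*pp^2*qq^4*rr + 4*pp^3*qq*rr^2*LL + 6*pp^3*qq^2*rr*LL + 4*pp^3*qq^2*rr^2 + (-3)*pp^3*qq^3*LL + -pp^3*qq^4 + (-4)*pp^4*qq*rr*LL + 2*pp^4*qq^2*rr + (-2)*pp^4*qq^3 + pp^5*qq*LL + -pp^5*qq^2 + 4*(tR*(2*pp*qq))*pp^2*qq*rr^2 + (-4)*(tR*(2*pp*qq))*pp^2*qq^2*rr + (tR*(2*pp*qq))*pp^2*qq^3 + (-4)*(tR*(2*pp*qq))*pp^3*qq*rr + 2*(tR*(2*pp*qq))*pp^3*qq^2 + (tR*(2*pp*qq))*pp^4*qq) * htRv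
      + (pp*qq^2*(pp+qq-2*rr)^2) * key
  have hd3f : d3*(pp*qq) = LL*(pp*qq - rr^2) := by
    refine mul_right_cancel₀ hW2ne ?_
    linear_combination (pp*qq*(2*pp*qq)^2) * hd3
      + (2*pp*qq^2*rr*LL + -pp*qq^3*LL + pp^2*qq^3 + (-2)*(tR*(2*pp*qq))*pp*qq*rr + (tQ*(2*pp*qq))*pp*qq^2) * htQv
      + ((-4)*pp*qq*rr^2*LL + 2*pp*qq^2*rr*LL + 2*pp^2*qq*rr*LL + (-2)*pp^2*qq^2*rr + -pp^3*qq*LL + pp^3*qq^2 + (tR*(2*pp*qq))*pp^2*qq) * htRv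
      + (pp*qq*(pp+qq-2*rr)) * key
  exact ⟨hd1f, hd2f, hd3f, main, hLpos⟩

lemma pd_dist_sq (X Y : Pt) : dist X Y ^ 2 = (inner ℝ (X - Y) (X - Y) : ℝ) := by
  rw [dist_eq_norm]; exact (real_inner_self_eq_norm_sq _).symm

lemma pd_inner_comb (u v w : Pt) (x1 x2 x3 y1 y2 y3 : ℝ) :
    (inner ℝ (x1 • u + x2 • v + x3 • w) (y1 • u + y2 • v + y3 • w) : ℝ) =
      x1*y1*(inner ℝ u u : ℝ) + x2*y2*(inner ℝ v v : ℝ) + x3*y3*(inner ℝ w w : ℝ)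
      + (x1*y2 + x2*y1)*(inner ℝ u v : ℝ) + (x1*y3 + x3*y1)*(inner ℝ u w : ℝ)
      + (x2*y3 + x3*y2)*(inner ℝ v w : ℝ) := by
  simp only [inner_add_left, inner_add_right, real_inner_smul_left, real_inner_smul_right,
    real_inner_comm v u, real_inner_comm w u, real_inner_comm w v]
  ring

lemma pd_inner_pos {x : Pt} (hx : x ≠ 0) : (0:ℝ) < inner ℝ x x :=
  lt_of_le_of_ne real_inner_self_nonneg (Ne.symm (inner_self_ne_zero.mpr hx))

lemma pd_collinear_smul {x y z : Pt} (h : Collinear ℝ ({x, y, z} : Set Pt)) (hyz : y ≠ z) :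
    ∃ t : ℝ, x - y = t • (z - y) := by
  obtain ⟨v₀, hvv⟩ := (collinear_iff_of_mem (show y ∈ ({x, y, z} : Set Pt) by simp)).1 h
  obtain ⟨rx, hx⟩ := hvv x (by simp)
  obtain ⟨rz, hz⟩ := hvv z (by simp)
  have hrz : rz ≠ 0 := by
    rintro rfl
    exact hyz (by simp [hz])
  refine ⟨rx / rz, ?_⟩
  have hz' : z - y = rz • v₀ := by rw [hz]; simp [vadd_eq_add]
  have hx' : x - y = rx • v₀ := by rw [hx]; simp [vadd_eq_add]
  rw [hx', hz', smul_smul, div_mul_cancel₀ _ hrz]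

set_option maxHeartbeats 1000000 in
theorem stmt13 (A B C S P Q R : Pt) (a b c K : ℝ)
    (hABC : AffineIndependent ℝ ![A, B, C])
    (hS : IsFirstIsodynamic A B C S)
    (hP : Collinear ℝ ({P, B, C} : Set Pt) ∧ (inner ℝ (S - P) (C - B) : ℝ) = 0)
    (hQ : Collinear ℝ ({Q, C, A} : Set Pt) ∧ (inner ℝ (S - Q) (A - C) : ℝ) = 0)
    (hR : Collinear ℝ ({R, A, B} : Set Pt) ∧ (inner ℝ (S - R) (B - A) : ℝ) = 0)
    (ha : a = dist B C) (hb : b = dist C A) (hc : c = dist A B)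
    (hK : K = b * c * Real.sin (∠ B A C) / 2) :
    dist P Q * dist P R * Real.sin (∠ Q P R) / 2 =
      2 * K ^ 2 * Real.sqrt 3 / (a ^ 2 + b ^ 2 + c ^ 2 + 4 * K * Real.sqrt 3) := by
  obtain ⟨hS1, hS2, -, O, rc, hOA, hOB, hOC, hOS⟩ := hS
  -- distinctness
  have hAB : A ≠ B := by
    have h := hABC.injective.ne (show (0:Fin 3) ≠ 1 by decide); simpa using h
  have hAC : A ≠ C := by
    have h := hABC.injective.ne (show (0:Fin 3) ≠ 2 by decide); simpa using h
  have hBC : B ≠ C := by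
    have h := hABC.injective.ne (show (1:Fin 3) ≠ 2 by decide); simpa using h
  have hncol : ¬Collinear ℝ ({A, B, C} : Set Pt) :=
    affineIndependent_iff_not_collinear_set.mp hABC
  -- feet
  obtain ⟨tP, htPv⟩ := pd_collinear_smul hP.1 hBC
  have hQcol : Collinear ℝ ({Q, A, C} : Set Pt) := by
    have h := hQ.1; rwa [Set.pair_comm C A] at h
  obtain ⟨tQ, htQv⟩ := pd_collinear_smul hQcol hAC
  obtain ⟨tR, htRv⟩ := pd_collinear_smul hR.1 hAB
  have hPp : P = tP • (C - B) + B := by rw [← htPv]; abel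
  have hQp : Q = tQ • (C - A) + A := by rw [← htQv]; abel
  have hRp : R = tR • (B - A) + A := by rw [← htRv]; abel
  -- span coordinates for S - A
  obtain ⟨α, β, hw⟩ : ∃ α β : ℝ, α • (B - A) + β • (C - A) = S - A := by
    have hvne : C - A ≠ 0 := sub_ne_zero.mpr (Ne.symm hAC)
    have hli : LinearIndependent ℝ ![B - A, C - A] := by
      rw [linearIndependent_fin2]
      constructor
      · simpa using hvne
      · intro s hs
        simp only [Matrix.cons_val_one, Matrix.head_cons, Matrix.cons_val_zero] at hs
        refine hncol ?_
        rw [collinear_iff_of_mem (show A ∈ ({A, B, C} : Set Pt) by simp)]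
        refine ⟨C - A, fun x hx => ?_⟩
        simp only [Set.mem_insert_iff, Set.mem_singleton_iff] at hx
        rcases hx with rfl | rfl | rfl
        · exact ⟨0, by simp⟩
        · exact ⟨s, by rw [vadd_eq_add, hs]; abel⟩
        · exact ⟨1, by rw [vadd_eq_add, one_smul]; abel⟩
    have hspan : Submodule.span ℝ (Set.range ![B - A, C - A]) = ⊤ :=
      hli.span_eq_top_of_card_eq_finrank (by simp)
    have hrange : Set.range ![B - A, C - A] = {B - A, C - A} := by
      simp [Matrix.range_cons, Matrix.range_empty, Set.pair_comm]
    refine Submodule.mem_span_pair.mp ?_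
    rw [← hrange, hspan]
    trivial
  -- atoms
  set u : Pt := B - A with hu
  set v : Pt := C - A with hv
  set w : Pt := S - A with hw0
  set t : Pt := O - A with ht0
  -- positivity facts
  have hpp : (0:ℝ) < inner ℝ u u := pd_inner_pos (by rw [hu]; exact sub_ne_zero.mpr (Ne.symm hAB))
  have hqq : (0:ℝ) < inner ℝ v v := pd_inner_pos (by rw [hv]; exact sub_ne_zero.mpr (Ne.symm hAC))
  have hL0 : (0:ℝ) ≤ inner ℝ w w := real_inner_self_nonneg
  have haBC : dist B C ^ 2 = (inner ℝ u u : ℝ) + (inner ℝ v v : ℝ) - 2*(inner ℝ u v : ℝ) := by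
    rw [pd_dist_sq, show B - C = (1:ℝ) • u + (-1:ℝ) • v + (0:ℝ) • w by
      rw [hu, hv, hw0]; module, pd_inner_comb]
    ring
  have ha' : (0:ℝ) < (inner ℝ u u : ℝ) + (inner ℝ v v : ℝ) - 2*(inner ℝ u v : ℝ) := by
    rw [← haBC]; exact pow_pos (dist_pos.mpr hBC) 2
  -- angle facts / K
  have hKpos : 0 < K := by
    rw [hK, hb, hc]
    have hb0 : 0 < dist C A := dist_pos.mpr (Ne.symm hAC)
    have hc0 : 0 < dist A B := dist_pos.mpr hAB
    have hsin0 : 0 < Real.sin (∠ B A C) := by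
      apply EuclideanGeometry.sin_pos_of_not_collinear
      intro hcl
      refine hncol ?_
      have hi : ({B, A, C} : Set Pt) = {A, B, C} := Set.insert_comm B A {C}
      rwa [hi] at hcl
    positivity
  have hang : ∠ B A C = InnerProductGeometry.angle u v := by
    rw [hu, hv]; simp [EuclideanGeometry.angle, vsub_eq_sub]
  have hcos : Real.cos (∠ B A C) * (‖u‖ * ‖v‖) = (inner ℝ u v : ℝ) := by
    rw [hang]; exact InnerProductGeometry.cos_angle_mul_norm_mul_norm _ _
  have hK2 : 4*K^2 = (inner ℝ u u : ℝ) * (inner ℝ v v : ℝ) - (inner ℝ u v : ℝ)^2 := by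
    have hsc := Real.sin_sq_add_cos_sq (∠ B A C)
    have hE3 : (inner ℝ u u : ℝ) = ‖u‖^2 := real_inner_self_eq_norm_sq _
    have hE4 : (inner ℝ v v : ℝ) = ‖v‖^2 := real_inner_self_eq_norm_sq _
    have hbn : dist C A = ‖v‖ := by rw [dist_eq_norm, ← hv]
    have hcn : dist A B = ‖u‖ := by rw [dist_eq_norm, norm_sub_rev, ← hu]
    rw [hK, hb, hc, hbn, hcn]
    linear_combination (‖u‖^2*‖v‖^2) * hsc
      + (-(Real.cos (∠ B A C)*(‖u‖*‖v‖) + (inner ℝ u v : ℝ))) * hcos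
      + (-(inner ℝ v v : ℝ)) * hE3 + (-(‖u‖^2)) * hE4
  -- span identities
  have hXd : (inner ℝ u w : ℝ) = α*(inner ℝ u u : ℝ) + β*(inner ℝ u v : ℝ) := by
    rw [← hw]
    simp only [inner_add_right, real_inner_smul_right]
  have hYd : (inner ℝ v w : ℝ) = α*(inner ℝ u v : ℝ) + β*(inner ℝ v v : ℝ) := by
    rw [← hw]
    simp only [inner_add_right, real_inner_smul_right, real_inner_comm v u]
  have hLd : (inner ℝ w w : ℝ) =
      α*(α*(inner ℝ u u : ℝ) + β*(inner ℝ u v : ℝ)) + β*(α*(inner ℝ u v : ℝ) + β*(inner ℝ v v : ℝ)) := by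
    conv_lhs => rw [← hw]
    simp only [inner_add_left, inner_add_right, real_inner_smul_left, real_inner_smul_right,
      real_inner_comm v u]
    ring
  -- isodynamic equations squared
  have e1 : ((inner ℝ w w : ℝ) - 2*(inner ℝ u w : ℝ) + (inner ℝ u u : ℝ)) * (inner ℝ v v : ℝ)
      = ((inner ℝ w w : ℝ) - 2*(inner ℝ v w : ℝ) + (inner ℝ v v : ℝ)) * (inner ℝ u u : ℝ) := by
    have h1 : dist S B ^2 * dist A C ^2 = dist S C ^2 * dist A B ^2 := by
      rw [← mul_pow, ← mul_pow, hS1]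
    rw [pd_dist_sq S B, pd_dist_sq A C, pd_dist_sq S C, pd_dist_sq A B,
      show S - B = (-1:ℝ) • u + (0:ℝ) • v + (1:ℝ) • w by rw [hu, hv, hw0]; module,
      show A - C = (0:ℝ) • u + (-1:ℝ) • v + (0:ℝ) • w by rw [hu, hv, hw0]; module,
      show S - C = (0:ℝ) • u + (-1:ℝ) • v + (1:ℝ) • w by rw [hu, hv, hw0]; module,
      show A - B = (-1:ℝ) • u + (0:ℝ) • v + (0:ℝ) • w by rw [hu, hv, hw0]; module] at h1
    simp only [pd_inner_comb] at h1
    linear_combination h1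
  have e2 : (inner ℝ w w : ℝ) * ((inner ℝ u u : ℝ) + (inner ℝ v v : ℝ) - 2*(inner ℝ u v : ℝ))
      = ((inner ℝ w w : ℝ) - 2*(inner ℝ v w : ℝ) + (inner ℝ v v : ℝ)) * (inner ℝ u u : ℝ) := by
    have h1 : dist S A ^2 * dist B C ^2 = dist S C ^2 * dist B A ^2 := by
      rw [← mul_pow, ← mul_pow, hS2]
    rw [pd_dist_sq S A, pd_dist_sq B C, pd_dist_sq S C, pd_dist_sq B A,
      show S - A = (0:ℝ) • u + (0:ℝ) • v + (1:ℝ) • w by rw [hu, hv, hw0]; module,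
      show B - C = (1:ℝ) • u + (-1:ℝ) • v + (0:ℝ) • w by rw [hu, hv, hw0]; module,
      show S - C = (0:ℝ) • u + (-1:ℝ) • v + (1:ℝ) • w by rw [hu, hv, hw0]; module,
      show B - A = (1:ℝ) • u + (0:ℝ) • v + (0:ℝ) • w by rw [hu, hv, hw0]; module] at h1
    simp only [pd_inner_comb] at h1
    linear_combination h1
  -- circumcenter inequality
  have hineq : (inner ℝ w w : ℝ) < α*(inner ℝ u u : ℝ) + β*(inner ℝ v v : ℝ) := by
    have hOu : 2*(inner ℝ u t : ℝ) = (inner ℝ u u : ℝ) := by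
      have h : dist O A ^2 = dist O B ^2 := by rw [hOA, hOB]
      rw [pd_dist_sq O A, pd_dist_sq O B,
        show O - A = (0:ℝ) • u + (1:ℝ) • t + (0:ℝ) • t by rw [hu, ht0]; module,
        show O - B = (-1:ℝ) • u + (1:ℝ) • t + (0:ℝ) • t by rw [hu, ht0]; module] at h
      simp only [pd_inner_comb] at h
      linear_combination h
    have hOv : 2*(inner ℝ v t : ℝ) = (inner ℝ v v : ℝ) := by
      have h : dist O A ^2 = dist O C ^2 := by rw [hOA, hOC]
      rw [pd_dist_sq O A, pd_dist_sq O C,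
        show O - A = (0:ℝ) • v + (1:ℝ) • t + (0:ℝ) • t by rw [hv, ht0]; module,
        show O - C = (-1:ℝ) • v + (1:ℝ) • t + (0:ℝ) • t by rw [hv, ht0]; module] at h
      simp only [pd_inner_comb] at h
      linear_combination h
    have hOS2 : dist O S ^2 < dist O A ^2 := by
      have h0 : dist O S < dist O A := by rw [hOA]; exact hOS
      exact pow_lt_pow_left₀ h0 dist_nonneg two_ne_zero
    rw [pd_dist_sq O S, pd_dist_sq O A,
      show O - S = (-1:ℝ) • w + (1:ℝ) • t + (0:ℝ) • t by rw [hw0, ht0]; module,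
      show O - A = (0:ℝ) • w + (1:ℝ) • t + (0:ℝ) • t by rw [hw0, ht0]; module] at hOS2
    simp only [pd_inner_comb] at hOS2
    have hWT : (inner ℝ w t : ℝ) = α*(inner ℝ u t : ℝ) + β*(inner ℝ v t : ℝ) := by
      rw [← hw]
      simp only [inner_add_left, real_inner_smul_left]
    have h2 : 2*(inner ℝ w t : ℝ) = α*(inner ℝ u u : ℝ) + β*(inner ℝ v v : ℝ) := by
      linear_combination 2*hWT + α*hOu + β*hOv
    linarith [hOS2, h2]
  -- pedal distance expressions
  have hd1 : dist P Q ^2 = (1-tP)^2*(inner ℝ u u:ℝ) + 2*(1-tP)*(tP-tQ)*(inner ℝ u v:ℝ) + (tP-tQ)^2*(inner ℝ v v:ℝ) := by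
    rw [pd_dist_sq, show P - Q = (1-tP) • u + (tP-tQ) • v + (0:ℝ) • w by
      rw [hPp, hQp, hu, hv, hw0]; module, pd_inner_comb]
    ring
  have hd2 : dist P R ^2 = (1-tP-tR)^2*(inner ℝ u u:ℝ) + 2*(1-tP-tR)*tP*(inner ℝ u v:ℝ) + tP^2*(inner ℝ v v:ℝ) := by
    rw [pd_dist_sq, show P - R = (1-tP-tR) • u + tP • v + (0:ℝ) • w by
      rw [hPp, hRp, hu, hv, hw0]; module, pd_inner_comb]
    ring
  have hd3 : dist Q R ^2 = tR^2*(inner ℝ u u:ℝ) - 2*tR*tQ*(inner ℝ u v:ℝ) + tQ^2*(inner ℝ v v:ℝ) := by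
    rw [pd_dist_sq, show Q - R = (-tR) • u + tQ • v + (0:ℝ) • w by
      rw [hQp, hRp, hu, hv, hw0]; module, pd_inner_comb]
    ring
  -- foot scalar equations
  have htP : tP*((inner ℝ u u:ℝ) + (inner ℝ v v:ℝ) - 2*(inner ℝ u v:ℝ))
      = (inner ℝ v w:ℝ) - (inner ℝ u w:ℝ) - (inner ℝ u v:ℝ) + (inner ℝ u u:ℝ) := by
    have h := hP.2
    rw [show S - P = (tP-1) • u + (-tP) • v + (1:ℝ) • w by rw [hPp, hu, hv, hw0]; module,
      show C - B = (-1:ℝ) • u + (1:ℝ) • v + (0:ℝ) • w by rw [hu, hv, hw0]; module,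
      pd_inner_comb] at h
    linear_combination -h
  have htQ : tQ*(inner ℝ v v:ℝ) = (inner ℝ v w:ℝ) := by
    have h := hQ.2
    rw [show S - Q = (0:ℝ) • u + (-tQ) • v + (1:ℝ) • w by rw [hQp, hu, hv, hw0]; module,
      show A - C = (0:ℝ) • u + (-1:ℝ) • v + (0:ℝ) • w by rw [hu, hv, hw0]; module,
      pd_inner_comb] at h
    linear_combination h
  have htR : tR*(inner ℝ u u:ℝ) = (inner ℝ u w:ℝ) := by
    have h := hR.2
    rw [show S - R = (-tR) • u + (0:ℝ) • v + (1:ℝ) • w by rw [hRp, hu, hv, hw0]; module] at h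
    simp only [inner_add_left, real_inner_smul_left, real_inner_comm u w, real_inner_comm u v] at h
    linear_combination -h
  -- core algebra
  obtain ⟨hd1f, hd2f, hd3f, main, hLpos⟩ :=
    pd_core (inner ℝ u u) (inner ℝ v v) (inner ℝ u v) (inner ℝ u w) (inner ℝ v w) (inner ℝ w w)
      K tP tQ tR α β (dist P Q ^2) (dist P R ^2) (dist Q R ^2)
      hpp hqq ha' hK2 hKpos hL0 hXd hYd hLd e1 e2 hineq htP htQ htR hd1 hd2 hd3
  have hpq : (0:ℝ) < (inner ℝ u u:ℝ)*(inner ℝ v v:ℝ) := mul_pos hpp hqq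
  have hD : (0:ℝ) < (inner ℝ u u:ℝ)*(inner ℝ v v:ℝ) - (inner ℝ u v:ℝ)^2 := by
    have h4 : 0 < K^2 := pow_pos hKpos 2
    linarith [hK2]
  have hdPR : dist P R = dist P Q := by
    have hsq : dist P R ^2 = dist P Q ^2 := mul_right_cancel₀ (ne_of_gt hpq) (hd2f.trans hd1f.symm)
    calc dist P R = Real.sqrt (dist P R^2) := (Real.sqrt_sq dist_nonneg).symm
      _ = Real.sqrt (dist P Q^2) := by rw [hsq]
      _ = dist P Q := Real.sqrt_sq dist_nonneg
  have hdQR : dist Q R = dist P Q := by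
    have hsq : dist Q R ^2 = dist P Q ^2 := mul_right_cancel₀ (ne_of_gt hpq) (hd3f.trans hd1f.symm)
    calc dist Q R = Real.sqrt (dist Q R^2) := (Real.sqrt_sq dist_nonneg).symm
      _ = Real.sqrt (dist P Q^2) := by rw [hsq]
      _ = dist P Q := Real.sqrt_sq dist_nonneg
  have hPQ2pos : 0 < dist P Q ^2 := by
    have h5 : 0 < (inner ℝ w w:ℝ) * ((inner ℝ u u:ℝ)*(inner ℝ v v:ℝ) - (inner ℝ u v:ℝ)^2) :=
      mul_pos hLpos hD
    have h6 : 0 < dist P Q^2 * ((inner ℝ u u:ℝ)*(inner ℝ v v:ℝ)) := by rw [hd1f]; exact h5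
    by_contra hcon
    push_neg at hcon
    have h7 : dist P Q^2 * ((inner ℝ u u:ℝ)*(inner ℝ v v:ℝ)) ≤ 0 :=
      mul_nonpos_iff.mpr (Or.inr ⟨hcon, hpq.le⟩)
    linarith
  have hPQpos : 0 < dist P Q := by
    rcases lt_or_eq_of_le (dist_nonneg : 0 ≤ dist P Q) with h | h
    · exact h
    · exfalso; rw [← h] at hPQ2pos; norm_num at hPQ2pos
  have hcosQPR : Real.cos (∠ Q P R) = 1/2 := by
    have hlc := EuclideanGeometry.law_cos Q P R
    rw [dist_comm Q P, dist_comm R P, hdPR, hdQR] at hlc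
    have h2ne : (2*dist P Q^2 : ℝ) ≠ 0 := ne_of_gt (mul_pos two_pos (pow_pos hPQpos 2))
    refine mul_left_cancel₀ h2ne ?_
    linear_combination hlc
  have hsin : Real.sin (∠ Q P R) = Real.sqrt 3 / 2 := by
    rw [Real.sin_eq_sqrt_one_sub_cos_sq (EuclideanGeometry.angle_nonneg Q P R)
      (EuclideanGeometry.angle_le_pi Q P R), hcosQPR]
    rw [show (1:ℝ) - (1/2)^2 = (Real.sqrt 3/2)^2 by
      linear_combination (-(1:ℝ)/4) * (Real.sq_sqrt (show (0:ℝ) ≤ 3 by norm_num))]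
    exact Real.sqrt_sq (by positivity)
  have hb2 : b^2 = (inner ℝ v v:ℝ) := by
    rw [hb, pd_dist_sq, show C - A = (0:ℝ)•u + (1:ℝ)•v + (0:ℝ)•w by rw [hu,hv,hw0]; module,
      pd_inner_comb]
    ring
  have hc2 : c^2 = (inner ℝ u u:ℝ) := by
    rw [hc, pd_dist_sq, show A - B = (-1:ℝ)•u + (0:ℝ)•v + (0:ℝ)•w by rw [hu,hv,hw0]; module,
      pd_inner_comb]
    ring
  have ha2 : a^2 = (inner ℝ u u:ℝ) + (inner ℝ v v:ℝ) - 2*(inner ℝ u v:ℝ) := by rw [ha, haBC]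
  have hden : (a^2 + b^2 + c^2 + 4*K*Real.sqrt 3) * (inner ℝ w w:ℝ)
      = 2*((inner ℝ u u:ℝ)*(inner ℝ v v:ℝ)) := by
    rw [ha2, hb2, hc2]
    linear_combination (-2)*main
  have hdenpos : 0 < a^2 + b^2 + c^2 + 4*K*Real.sqrt 3 := by
    have h8 : 0 ≤ 4*K*Real.sqrt 3 :=
      mul_nonneg (mul_nonneg (by norm_num) hKpos.le) (Real.sqrt_nonneg 3)
    rw [ha2, hb2, hc2]
    linarith [ha', hpp, hqq]
  rw [hdPR, hsin]
  rw [show dist P Q * dist P Q * (Real.sqrt 3 / 2) / 2 = dist P Q^2 * Real.sqrt 3 / 4 by ring]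
  rw [show dist P Q^2 = (inner ℝ w w:ℝ)*((inner ℝ u u:ℝ)*(inner ℝ v v:ℝ) - (inner ℝ u v:ℝ)^2)
      /((inner ℝ u u:ℝ)*(inner ℝ v v:ℝ)) from by rw [eq_div_iff (ne_of_gt hpq)]; exact hd1f]
  rw [show (inner ℝ w w:ℝ)*((inner ℝ u u:ℝ)*(inner ℝ v v:ℝ) - (inner ℝ u v:ℝ)^2)
      /((inner ℝ u u:ℝ)*(inner ℝ v v:ℝ)) * Real.sqrt 3 / 4
      = ((inner ℝ w w:ℝ)*((inner ℝ u u:ℝ)*(inner ℝ v v:ℝ) - (inner ℝ u v:ℝ)^2) * Real.sqrt 3)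
      /(4*((inner ℝ u u:ℝ)*(inner ℝ v v:ℝ))) by ring]
  rw [div_eq_div_iff (by positivity) (ne_of_gt hdenpos)]
  linear_combination (-(Real.sqrt 3)*(a^2+b^2+c^2+4*K*Real.sqrt 3)*(inner ℝ w w:ℝ)) * hK2
    + (4*K^2*Real.sqrt 3) * hden
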